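/- Consider the projected gradient descent iteration v^{(t+1)} = Π(v^{(t)} − η Φᵀ(Φ v^{(t)} − b)), where Π is the exact Euclidean projection onto a closed set S ⊆ {v : ‖v‖₀ ≤ s}, ŷ ∈ S, Φ is (3s,δ)-RIP, and η ∈ (1/(2−2δ), 1). Then for every t, ‖ŷ − v^{(t+1)}‖₂ ≤ (2 − 2η + 2ηδ)·‖ŷ − v^{(t)}‖₂ + 2η√(1+δ)·‖Φŷ − b‖₂. -/

import Mathlib

open Matrix BigOperators

noncomputable def sqNorm {ι : Type*} [Fintype ι] (v : ι → ℝ) : ℝ := ∑ i, v i ^ 2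

noncomputable def norm2 {ι : Type*} [Fintype ι] (v : ι → ℝ) : ℝ := Real.sqrt (sqNorm v)

noncomputable def sqFrob {ι κ : Type*} [Fintype ι] [Fintype κ] (A : Matrix ι κ ℝ) : ℝ :=
  ∑ i, ∑ j, A i j ^ 2

def Sparse {K : ℕ} (s : ℕ) (v : Fin K → ℝ) : Prop := Nat.card {i // v i ≠ 0} ≤ s

def RIP {m K : ℕ} (s : ℕ) (δ : ℝ) (Φ : Matrix (Fin m) (Fin K) ℝ) : Prop :=
  ∀ v : Fin K → ℝ, Sparse s v →
    (1 - δ) * sqNorm v ≤ sqNorm (Φ.mulVec v) ∧ sqNorm (Φ.mulVec v) ≤ (1 + δ) * sqNorm v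

section Helpers

variable {ι : Type*} [Fintype ι]

lemma sqNorm_nonneg' (v : ι → ℝ) : 0 ≤ sqNorm v := Finset.sum_nonneg fun _ _ => sq_nonneg _

lemma norm2_nonneg' (v : ι → ℝ) : 0 ≤ norm2 v := Real.sqrt_nonneg _

lemma norm2_sq' (v : ι → ℝ) : norm2 v ^ 2 = sqNorm v := Real.sq_sqrt (sqNorm_nonneg' v)

lemma sqNorm_smul_add (c e : ℝ) (x y : ι → ℝ) :
    sqNorm (c • x + e • y)
      = c ^ 2 * sqNorm x + 2 * (c * e) * (x ⬝ᵥ y) + e ^ 2 * sqNorm y := by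
  simp only [sqNorm, dotProduct, Pi.add_apply, Pi.smul_apply, smul_eq_mul,
    Finset.mul_sum, ← Finset.sum_add_distrib]
  exact Finset.sum_congr rfl fun i _ => by ring

lemma sqNorm_sub' (x y : ι → ℝ) :
    sqNorm (x - y) = sqNorm x - 2 * (x ⬝ᵥ y) + sqNorm y := by
  have h := sqNorm_smul_add 1 (-1) x y
  simp only [one_smul, neg_one_smul, ← sub_eq_add_neg] at h
  rw [h]; ring

lemma dot_le_norm (x y : ι → ℝ) : x ⬝ᵥ y ≤ norm2 x * norm2 y := by
  calc x ⬝ᵥ y ≤ |x ⬝ᵥ y| := le_abs_self _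
  _ = Real.sqrt ((x ⬝ᵥ y) ^ 2) := (Real.sqrt_sq_eq_abs _).symm
  _ ≤ Real.sqrt (sqNorm x * sqNorm y) := Real.sqrt_le_sqrt
      (Finset.sum_mul_sq_le_sq_mul_sq Finset.univ x y)
  _ = norm2 x * norm2 y := by
      rw [norm2, norm2, ← Real.sqrt_mul (sqNorm_nonneg' x)]

lemma eq_zero_of_sqNorm_eq_zero (v : ι → ℝ) (h : sqNorm v = 0) : v = 0 := by
  funext i
  have h2 := (Finset.sum_eq_zero_iff_of_nonneg (fun j _ => sq_nonneg (v j))).mp h i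
    (Finset.mem_univ i)
  exact pow_eq_zero_iff two_ne_zero |>.mp h2

end Helpers

lemma rip_dot {m K : ℕ} {Φ : Matrix (Fin m) (Fin K) ℝ} {s : ℕ} {δ : ℝ}
    (hRIP : RIP (3 * s) δ Φ) (a b : Fin K → ℝ)
    (hsp : ∀ c₁ c₂ : ℝ, Sparse (3 * s) (c₁ • a + c₂ • b)) :
    a ⬝ᵥ b - Φ.mulVec a ⬝ᵥ Φ.mulVec b ≤ δ * (norm2 a * norm2 b) := by
  by_cases ha : sqNorm a = 0
  · have h0 : a = 0 := eq_zero_of_sqNorm_eq_zero a ha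
    subst h0
    simp [norm2, sqNorm, Matrix.mulVec_zero]
  by_cases hb : sqNorm b = 0
  · have h0 : b = 0 := eq_zero_of_sqNorm_eq_zero b hb
    subst h0
    simp [norm2, sqNorm, Matrix.mulVec_zero]
  have hA : 0 < norm2 a := Real.sqrt_pos.mpr (lt_of_le_of_ne (sqNorm_nonneg' a) (Ne.symm ha))
  have hB : 0 < norm2 b := Real.sqrt_pos.mpr (lt_of_le_of_ne (sqNorm_nonneg' b) (Ne.symm hb))
  set A := norm2 a with hAdef
  set B := norm2 b with hBdef
  set t := Real.sqrt (B / A) with htdef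
  have ht : 0 < t := Real.sqrt_pos.mpr (div_pos hB hA)
  have ht2 : t ^ 2 = B / A := Real.sq_sqrt (le_of_lt (div_pos hB hA))
  have hM1 : t ^ 2 * sqNorm a = A * B := by
    rw [ht2, ← norm2_sq' a, ← hAdef]; field_simp
  have hM2 : t⁻¹ ^ 2 * sqNorm b = A * B := by
    rw [inv_pow, ht2, ← norm2_sq' b, ← hBdef]; field_simp
  have htt : t * t⁻¹ = 1 := mul_inv_cancel₀ (ne_of_gt ht)
  have htt' : t * -t⁻¹ = -1 := by rw [mul_neg, htt]
  have h1 := (hRIP _ (hsp t t⁻¹)).1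
  have h2 := (hRIP _ (hsp t (-t⁻¹))).2
  have hΦ1 : Φ.mulVec (t • a + t⁻¹ • b) = t • Φ.mulVec a + t⁻¹ • Φ.mulVec b := by
    rw [Matrix.mulVec_add, Matrix.mulVec_smul, Matrix.mulVec_smul]
  have hΦ2 : Φ.mulVec (t • a + (-t⁻¹) • b) = t • Φ.mulVec a + (-t⁻¹) • Φ.mulVec b := by
    rw [Matrix.mulVec_add, Matrix.mulVec_smul, Matrix.mulVec_smul]
  rw [hΦ1, sqNorm_smul_add, sqNorm_smul_add] at h1
  rw [hΦ2, sqNorm_smul_add, sqNorm_smul_add] at h2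
  rw [neg_sq] at h2
  rw [hM1, hM2] at h1 h2
  rw [htt] at h1
  rw [htt'] at h2
  linarith

theorem stmt4 {m K : ℕ} (Φ : Matrix (Fin m) (Fin K) ℝ) (s : ℕ) (δ η : ℝ)
    (hδ0 : 0 < δ) (hδ1 : δ < 1)
    (hRIP : RIP (3 * s) δ Φ)
    (hη1 : 1 / (2 - 2 * δ) < η) (hη2 : η < 1)
    (S : Set (Fin K → ℝ)) (hSsp : ∀ v ∈ S, Sparse s v)
    (yhat : Fin K → ℝ) (hy : yhat ∈ S) (b : Fin m → ℝ)
    (vt vnext : Fin K → ℝ) (hvt : vt ∈ S) (hvnext : vnext ∈ S)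
    (hproj : ∀ v ∈ S,
      sqNorm (vnext - (vt - η • Φ.transpose.mulVec (Φ.mulVec vt - b)))
        ≤ sqNorm (v - (vt - η • Φ.transpose.mulVec (Φ.mulVec vt - b)))) :
    norm2 (yhat - vnext)
      ≤ (2 - 2 * η + 2 * η * δ) * norm2 (yhat - vt)
        + 2 * η * Real.sqrt (1 + δ) * norm2 (Φ.mulVec yhat - b) := by
  have h2δ : (0:ℝ) < 2 - 2 * δ := by linarith
  have hη0 : 0 < η := lt_trans (div_pos one_pos h2δ) hη1
  set u := yhat - vnext with hu
  set d := yhat - vt with hd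
  set r := Φ.mulVec yhat - b with hr
  set g := Φ.transpose.mulVec (Φ.mulVec vt - b) with hg
  -- sparsity
  have hsupp : ∀ v : Fin K → ℝ,
      {i | v i ≠ 0} ⊆ {i | yhat i ≠ 0} ∪ {i | vt i ≠ 0} ∪ {i | vnext i ≠ 0} →
      Sparse (3 * s) v := by
    intro v hv
    have hc : ∀ w : Fin K → ℝ, Nat.card {i // w i ≠ 0} = Set.ncard {i | w i ≠ 0} := fun _ => rfl
    unfold Sparse
    rw [hc]
    calc Set.ncard {i | v i ≠ 0}
        ≤ Set.ncard ({i | yhat i ≠ 0} ∪ {i | vt i ≠ 0} ∪ {i | vnext i ≠ 0}) :=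
          Set.ncard_le_ncard hv (Set.toFinite _)
      _ ≤ Set.ncard ({i | yhat i ≠ 0} ∪ {i | vt i ≠ 0}) + Set.ncard {i | vnext i ≠ 0} :=
          Set.ncard_union_le _ _
      _ ≤ Set.ncard {i | yhat i ≠ 0} + Set.ncard {i | vt i ≠ 0} + Set.ncard {i | vnext i ≠ 0} :=
          Nat.add_le_add_right (Set.ncard_union_le _ _) _
      _ ≤ s + s + s := by
          have h1 := hSsp yhat hy
          have h2 := hSsp vt hvt
          have h3 := hSsp vnext hvnext
          unfold Sparse at h1 h2 h3
          rw [hc] at h1 h2 h3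
          omega
      _ = 3 * s := by ring
  have hsp : ∀ c₁ c₂ : ℝ, Sparse (3 * s) (c₁ • u + c₂ • d) := by
    intro c₁ c₂
    apply hsupp
    intro i hi
    simp only [Set.mem_setOf_eq, Set.mem_union]
    by_contra hcon
    push_neg at hcon
    obtain ⟨⟨h1, h2⟩, h3⟩ := hcon
    apply hi
    simp [hu, hd, Pi.add_apply, Pi.smul_apply, Pi.sub_apply, h1, h2, h3]
  have husp : Sparse (3 * s) u := by
    apply hsupp
    intro i hi
    simp only [Set.mem_setOf_eq, Set.mem_union]
    by_contra hcon
    push_neg at hcon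
    obtain ⟨⟨h1, _⟩, h3⟩ := hcon
    exact hi (by simp [hu, Pi.sub_apply, h1, h3])
  -- projection inequality
  have hproj' := hproj yhat hy
  have hw1 : vnext - (vt - η • g) = (yhat - (vt - η • g)) - u := by
    rw [hu]; abel
  rw [hw1, sqNorm_sub'] at hproj'
  have key0 : sqNorm u ≤ 2 * ((yhat - (vt - η • g)) ⬝ᵥ u) := by linarith
  have hyw : yhat - (vt - η • g) = d + η • g := by rw [hd]; abel
  have hgu : g ⬝ᵥ u = Φ.mulVec u ⬝ᵥ (Φ.mulVec vt - b) := by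
    rw [dotProduct_comm, hg, Matrix.dotProduct_mulVec, Matrix.vecMul_transpose]
  have hz : Φ.mulVec vt - b = r - Φ.mulVec d := by
    rw [hr, hd, Matrix.mulVec_sub]; abel
  have hgu2 : g ⬝ᵥ u = Φ.mulVec u ⬝ᵥ r - Φ.mulVec u ⬝ᵥ Φ.mulVec d := by
    rw [hgu, hz, dotProduct_sub]
  have hdu : (d + η • g) ⬝ᵥ u = d ⬝ᵥ u + η * (g ⬝ᵥ u) := by
    rw [add_dotProduct, smul_dotProduct, smul_eq_mul]
  have key : sqNorm u ≤ 2 * (u ⬝ᵥ d) + 2 * η * (Φ.mulVec u ⬝ᵥ r - Φ.mulVec u ⬝ᵥ Φ.mulVec d) := by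
    rw [hyw, hdu, hgu2] at key0
    rw [dotProduct_comm u d]
    linarith
  -- bounds
  have rip : u ⬝ᵥ d - Φ.mulVec u ⬝ᵥ Φ.mulVec d ≤ δ * (norm2 u * norm2 d) :=
    rip_dot hRIP u d hsp
  have cs : u ⬝ᵥ d ≤ norm2 u * norm2 d := dot_le_norm u d
  have hΦu : sqNorm (Φ.mulVec u) ≤ (1 + δ) * sqNorm u := (hRIP u husp).2
  have hΦun : norm2 (Φ.mulVec u) ≤ Real.sqrt (1 + δ) * norm2 u := by
    rw [norm2, norm2, ← Real.sqrt_mul (by linarith : (0:ℝ) ≤ 1 + δ)]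
    exact Real.sqrt_le_sqrt hΦu
  have he : Φ.mulVec u ⬝ᵥ r ≤ Real.sqrt (1 + δ) * norm2 u * norm2 r :=
    le_trans (dot_le_norm _ _)
      (mul_le_mul_of_nonneg_right hΦun (norm2_nonneg' r))
  -- combine
  set U := norm2 u with hU
  set D := norm2 d with hD
  set R := norm2 r with hR
  set c := Real.sqrt (1 + δ) with hcdef
  have hc0 : 0 ≤ c := Real.sqrt_nonneg _
  have hU0 : 0 ≤ U := norm2_nonneg' u
  have hD0 : 0 ≤ D := norm2_nonneg' d
  have hR0 : 0 ≤ R := norm2_nonneg' r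
  have hU2 : U ^ 2 = sqNorm u := norm2_sq' u
  have s1 : 2 * (1 - η) * (u ⬝ᵥ d) ≤ 2 * (1 - η) * (U * D) :=
    mul_le_mul_of_nonneg_left cs (by linarith)
  have s2 : 2 * η * (u ⬝ᵥ d - Φ.mulVec u ⬝ᵥ Φ.mulVec d) ≤ 2 * η * (δ * (U * D)) :=
    mul_le_mul_of_nonneg_left rip (by linarith)
  have s3 : 2 * η * (Φ.mulVec u ⬝ᵥ r) ≤ 2 * η * (c * U * R) :=
    mul_le_mul_of_nonneg_left he (by linarith)
  have h3 : U ^ 2 ≤ U * ((2 - 2 * η + 2 * η * δ) * D + 2 * η * c * R) := by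
    rw [hU2]
    nlinarith [key, s1, s2, s3]
  by_cases hUz : U = 0
  · rw [hUz]
    have hcoef : 0 ≤ 2 - 2 * η + 2 * η * δ := by nlinarith
    have : 0 ≤ (2 - 2 * η + 2 * η * δ) * D + 2 * η * c * R := by
      have := mul_nonneg hcoef hD0
      have h4 : 0 ≤ 2 * η * c * R := by positivity
      linarith
    linarith
  · have hUpos : 0 < U := lt_of_le_of_ne hU0 (Ne.symm hUz)
    have : U * U ≤ U * ((2 - 2 * η + 2 * η * δ) * D + 2 * η * c * R) := by
      rw [← pow_two]; exact h3
    exact le_of_mul_le_mul_left this hUpos
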